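/- Let \nu: X \to Y be the pushout identifying two disjoint Weil divisors D, D' on a Noetherian algebraic space X via an isomorphism \sigma: D \to D'. Let L be a line bundle on X equipped with an isomorphism \phi: L|_D \to L|_{D'} covering \sigma. Then there exists a line bundle \mathcal{L} on Y with \nu^*\mathcal{L} \cong L; explicitly, \mathcal{L} is the kernel of the composite \nu_*L \to \nu_*(L|_D \oplus L|_{D'}) \to \nu_*(L|_D \oplus L|_{D'})/\Gamma_\phi, where \Gamma_\phi is the graph line subbundle of (\sigma^{-1})^*(L|_D) \oplus L|_{D'}. -/

import Mathlib

universe u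

/-- A module is invertible (a line bundle) if it admits a tensor inverse. -/
def IsInvertibleModule (R : Type u) [CommRing R] (M : Type u)
    [AddCommGroup M] [Module R M] : Prop :=
  ∃ (N : Type u) (_ : AddCommGroup N) (_ : Module R N),
    Nonempty ((TensorProduct R M N) ≃ₗ[R] R)

open TensorProduct

section Pair

variable {R : Type u} [CommRing R] {P Q : Type u}
  [AddCommGroup P] [Module R P] [AddCommGroup Q] [Module R Q]

lemma pair_K (e : (P ⊗[R] Q) ≃ₗ[R] R) (z : P ⊗[R] Q) : z = e z • e.symm 1 := by
  apply e.injective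
  rw [map_smul, LinearEquiv.apply_symm_apply, smul_eq_mul, mul_one]

lemma pair_star (e : (P ⊗[R] Q) ≃ₗ[R] R) (m x : P) (n n' : Q) :
    e (m ⊗ₜ n) • (x ⊗ₜ[R] n') = (e (m ⊗ₜ n) * e (x ⊗ₜ n')) • e.symm 1 := by
  conv_lhs => rw [pair_K e (x ⊗ₜ n')]
  rw [smul_smul]

lemma pair_one_eq_sum (e : (P ⊗[R] Q) ≃ₗ[R] R) (S : Finset (P × Q))
    (hS : (e.symm 1 : P ⊗[R] Q) = ∑ i ∈ S, i.1 ⊗ₜ i.2) :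
    ∑ i ∈ S, e (i.1 ⊗ₜ i.2) = 1 := by
  rw [← map_sum, ← hS, e.apply_symm_apply]

lemma pair_L0 (e : (P ⊗[R] Q) ≃ₗ[R] R) (w : P)
    (h : ∀ q : Q, (w ⊗ₜ[R] q : P ⊗[R] Q) = 0) : w = 0 := by
  obtain ⟨S, hS⟩ := TensorProduct.exists_finset (e.symm 1 : P ⊗[R] Q)
  have h1 : ∑ i ∈ S, e (i.1 ⊗ₜ i.2) = 1 := pair_one_eq_sum e S hS
  have hw : w = (∑ i ∈ S, e (i.1 ⊗ₜ i.2)) • w := by rw [h1, one_smul]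
  rw [hw, Finset.sum_smul]
  refine Finset.sum_eq_zero fun i _ => ?_
  let F : P ⊗[R] Q →ₗ[R] P := TensorProduct.lift (LinearMap.mk₂ R
    (fun y n => e (i.1 ⊗ₜ n) • y)
    (fun y y' n => smul_add _ _ _)
    (fun a y n => smul_comm _ _ _)
    (fun y n n' => by rw [TensorProduct.tmul_add, map_add, add_smul])
    (fun a y n => by rw [TensorProduct.tmul_smul, map_smul, smul_eq_mul, mul_smul]))
  have hF : e (i.1 ⊗ₜ i.2) • w = F (w ⊗ₜ i.2) := by simp [F]
  rw [hF, h i.2, map_zero]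

lemma pair_B (e : (P ⊗[R] Q) ≃ₗ[R] R) (m x p : P) (n n' q : Q) :
    e (m ⊗ₜ n) * (e (x ⊗ₜ q) * e (p ⊗ₜ n')) =
    e (x ⊗ₜ n') * (e (m ⊗ₜ q) * e (p ⊗ₜ n)) := by
  let E2 : P ⊗[R] Q →ₗ[R] R := TensorProduct.lift (LinearMap.mk₂ R
    (fun y n'' => e (y ⊗ₜ q) * e (p ⊗ₜ n''))
    (fun y y' n'' => by rw [TensorProduct.add_tmul, map_add, add_mul])
    (fun a y n'' => by
                       rw [← TensorProduct.smul_tmul', map_smul, smul_eq_mul, smul_eq_mul,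
                         mul_assoc])
    (fun y n1 n2 => by rw [TensorProduct.tmul_add, map_add, mul_add])
    (fun a y n'' => by
                       rw [TensorProduct.tmul_smul, map_smul, smul_eq_mul, smul_eq_mul,
                         mul_left_comm]))
  have hstar : e (m ⊗ₜ n) • (x ⊗ₜ[R] n') = e (x ⊗ₜ n') • (m ⊗ₜ[R] n) := by
    rw [pair_star, pair_star, mul_comm]
  have h := congrArg E2 hstar
  simpa [E2, smul_eq_mul] using h

lemma pair_TD (e : (P ⊗[R] Q) ≃ₗ[R] R) (x m p : P) (n n' q s : Q) :
    (e (x ⊗ₜ n) * e (m ⊗ₜ n') - e (m ⊗ₜ n) * e (x ⊗ₜ n')) * (e (p ⊗ₜ q) * e (p ⊗ₜ s)) = 0 := by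
  have i1 := pair_B e x m p n q n'
  have i2 := pair_B e m p p q s n
  linear_combination (e (p ⊗ₜ[R] s)) * i1 + (e (x ⊗ₜ[R] n')) * i2

lemma pair_Tsym (e : (P ⊗[R] Q) ≃ₗ[R] R) (x m : P) (n n' : Q) :
    e (x ⊗ₜ n) * e (m ⊗ₜ n') = e (m ⊗ₜ n) * e (x ⊗ₜ n') := by
  rw [← sub_eq_zero]
  set T := e (x ⊗ₜ n) * e (m ⊗ₜ n') - e (m ⊗ₜ n) * e (x ⊗ₜ n') with hTdef
  let J : Ideal R := Ideal.span {a | ∃ p q s, a = e (p ⊗ₜ q) * e (p ⊗ₜ s)}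
  have hJK : ∀ a ∈ J, T * a = 0 := by
    intro a ha
    have hle : J ≤ LinearMap.ker (LinearMap.mul R R T) := by
      rw [Ideal.span_le]
      rintro _ ⟨p, q, s, rfl⟩
      simp only [SetLike.mem_coe, LinearMap.mem_ker, LinearMap.mul_apply_apply]
      exact pair_TD e x m p n n' q s
    simpa using hle ha
  have hJtop : J = ⊤ := by
    rw [← Ideal.radical_eq_top, Ideal.eq_top_iff_one]
    obtain ⟨S, hS⟩ := TensorProduct.exists_finset (e.symm 1 : P ⊗[R] Q)
    rw [← pair_one_eq_sum e S hS]
    refine Ideal.sum_mem _ fun i _ => ?_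
    exact Ideal.mem_radical_iff.mpr ⟨2, by
      rw [pow_two]; exact Ideal.subset_span ⟨i.1, i.2, i.2, rfl⟩⟩
  have := hJK 1 (hJtop ▸ Submodule.mem_top)
  simpa using this

lemma pair_sym (e : (P ⊗[R] Q) ≃ₗ[R] R) (x m : P) (n : Q) :
    e (x ⊗ₜ n) • m = e (m ⊗ₜ n) • x := by
  rw [← sub_eq_zero]
  apply pair_L0 e
  intro q
  rw [TensorProduct.sub_tmul, ← TensorProduct.smul_tmul', ← TensorProduct.smul_tmul',
    pair_star, pair_star, pair_Tsym e x m n q, sub_self]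

end Pair

set_option maxHeartbeats 4000000 in
/-- affine model of the pushout: `X = Spec A`, the two disjoint
divisors `D, D'` have ideals `I, I'` with `I + I' = A`, the gluing isomorphism is
`σ : A/I ≅ A/I'`, and the pushout `Y = Spec B` where `B ⊆ A` is the equalizer
subring `{a : σ(a mod I) = a mod I'}` (`ν` corresponds to `B ↪ A`).  Let `L` be a
line bundle (invertible `A`-module) with a gluing isomorphism
`φ : L/IL ≅ L/I'L` which is `σ`-semilinear (it covers `σ`).  Then `L` descends:
the `B`-submodule `{m : φ(m mod IL) = m mod I'L}` of `L` is an invertible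
`B`-module `𝓛` with `A ⊗_B 𝓛 ≅ L` (i.e. `ν^*𝓛 ≅ L`). -/
theorem descend_line_bundle_along_pushout
    {A : Type u} [CommRing A] {B : Type u} [CommRing B] [Algebra B A]
    (hinj : Function.Injective (algebraMap B A))
    (I I' : Ideal A) (hdisj : I ⊔ I' = ⊤)
    (σ : (A ⧸ I) ≃+* (A ⧸ I'))
    (hB : Set.range (algebraMap B A) =
      {a : A | σ (Ideal.Quotient.mk I a) = Ideal.Quotient.mk I' a})
    (L : Type u) [AddCommGroup L] [Module A L] [Module B L] [IsScalarTower B A L]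
    (hL : IsInvertibleModule A L)
    (φ : (L ⧸ (I • (⊤ : Submodule A L))) ≃+ (L ⧸ (I' • (⊤ : Submodule A L))))
    (hφ : ∀ (a b : A) (m : L),
      σ (Ideal.Quotient.mk I a) = Ideal.Quotient.mk I' b →
      φ (Submodule.Quotient.mk (a • m)) = b • φ (Submodule.Quotient.mk m)) :
    ∃ M : Submodule B L,
      (∀ m : L, m ∈ M ↔
        φ (Submodule.Quotient.mk m) = Submodule.Quotient.mk m) ∧
      IsInvertibleModule B M ∧
      Nonempty ((TensorProduct B A M) ≃ₗ[A] L) := by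
  classical
  obtain ⟨N, iN1, iN2, ⟨e⟩⟩ := hL
  letI : AddCommGroup N := iN1
  letI : Module A N := iN2
  -- range characterization
  have hmem : ∀ a : A, σ (Ideal.Quotient.mk I a) = Ideal.Quotient.mk I' a →
      ∃ b : B, algebraMap B A b = a := by
    intro a ha
    exact (Set.ext_iff.mp hB a).mpr ha
  have hmem' : ∀ b : B, σ (Ideal.Quotient.mk I (algebraMap B A b)) =
      Ideal.Quotient.mk I' (algebraMap B A b) := by
    intro b
    exact (Set.ext_iff.mp hB (algebraMap B A b)).mp ⟨b, rfl⟩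
  -- partition of unity
  obtain ⟨ε, hεI, ε', hε'I', hεsum⟩ : ∃ x ∈ I, ∃ y ∈ I', x + y = 1 :=
    Submodule.mem_sup.mp (hdisj ▸ (Submodule.mem_top : (1:A) ∈ (⊤ : Ideal A)))
  -- the submodule M
  set M : Submodule B L :=
    { carrier := {m | φ (Submodule.Quotient.mk m) = Submodule.Quotient.mk m}
      add_mem' := by
        intro m m' hm hm'
        simp only [Set.mem_setOf_eq] at *
        rw [show Submodule.Quotient.mk (m + m') =
          (Submodule.Quotient.mk m + Submodule.Quotient.mk m' :
            L ⧸ (I • (⊤ : Submodule A L))) from rfl, map_add, hm, hm']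
        rfl
      zero_mem' := by
        simp only [Set.mem_setOf_eq]
        rw [show (Submodule.Quotient.mk 0 : L ⧸ (I • (⊤ : Submodule A L))) = 0 from rfl, map_zero]
        rfl
      smul_mem' := by
        intro b m hm
        simp only [Set.mem_setOf_eq] at *
        rw [← algebraMap_smul A b m, hφ _ _ m (hmem' b), hm, ← Submodule.Quotient.mk_smul,
          algebraMap_smul]
    } with hMdef
  have hMiff : ∀ m : L, m ∈ M ↔
      φ (Submodule.Quotient.mk m) = Submodule.Quotient.mk m := fun _ => Iff.rfl
  -- pairing-into-ideal helpers
  have hpair : ∀ (K : Ideal A), ∀ x ∈ (K • (⊤ : Submodule A L)), ∀ nn : N,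
      e (x ⊗ₜ nn) ∈ K := by
    intro K x hx
    refine Submodule.smul_induction_on hx ?_ ?_
    · intro r hr y _ nn
      rw [← TensorProduct.smul_tmul', map_smul, smul_eq_mul]
      exact Ideal.mul_mem_right _ _ hr
    · intro x1 x2 h1 h2 nn
      rw [TensorProduct.add_tmul, map_add]
      exact Ideal.add_mem _ (h1 nn) (h2 nn)
  have hNpair : ∀ (K : Ideal A), ∀ q ∈ (K • (⊤ : Submodule A N)), ∀ x : L,
      e (x ⊗ₜ q) ∈ K := by
    intro K q hq
    refine Submodule.smul_induction_on hq ?_ ?_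
    · intro r hr y _ x
      rw [TensorProduct.tmul_smul, map_smul, smul_eq_mul]
      exact Ideal.mul_mem_right _ _ hr
    · intro q1 q2 h1 h2 x
      rw [TensorProduct.tmul_add, map_add]
      exact Ideal.add_mem _ (h1 x) (h2 x)
  -- symmetry lemmas
  have hsym : ∀ (x m : L) (n : N), e (x ⊗ₜ n) • m = e (m ⊗ₜ n) • x := pair_sym e
  have hNsym : ∀ (y : L) (n n' : N), e (y ⊗ₜ n) • n' = e (y ⊗ₜ n') • n := by
    intro y n n'
    have := pair_sym ((TensorProduct.comm A N L).trans e) n n' y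
    simpa [TensorProduct.comm_tmul] using this
  -- finite representation of e.symm 1
  obtain ⟨S, hS⟩ := TensorProduct.exists_finset (e.symm 1 : L ⊗[A] N)
  have h1 : ∑ i ∈ S, e (i.1 ⊗ₜ i.2) = 1 := pair_one_eq_sum e S hS
  -- dual basis
  have hDB : ∀ m : L, ∑ i ∈ S, e (m ⊗ₜ i.2) • i.1 = m := by
    intro m
    calc ∑ i ∈ S, e (m ⊗ₜ i.2) • i.1 = ∑ i ∈ S, e (i.1 ⊗ₜ i.2) • m :=
          Finset.sum_congr rfl fun i _ => (hsym i.1 m i.2).symm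
    _ = (∑ i ∈ S, e (i.1 ⊗ₜ i.2)) • m := (Finset.sum_smul).symm
    _ = m := by rw [h1, one_smul]
  -- scalar decompositions of elements of A
  have hadec : ∀ a : A, a = ∑ i ∈ S, e ((a • i.1) ⊗ₜ i.2) := by
    intro a
    have : a • (e.symm 1 : L ⊗[A] N) = ∑ i ∈ S, (a • i.1) ⊗ₜ i.2 := by
      rw [hS, Finset.smul_sum]
      exact Finset.sum_congr rfl fun i _ => TensorProduct.smul_tmul' a i.1 i.2
    have h2 := congrArg e this
    rw [map_smul, LinearEquiv.apply_symm_apply, smul_eq_mul, mul_one, map_sum] at h2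
    exact h2
  have hmksum : ∀ (p : Submodule A L) (f : L × N → L),
      (Submodule.Quotient.mk (∑ i ∈ S, f i) : L ⧸ p) =
        ∑ i ∈ S, Submodule.Quotient.mk (f i) := by
    intro p f
    rw [← Submodule.mkQ_apply, map_sum]
    simp only [Submodule.mkQ_apply]
  -- approximation of any element of L by M mod I•⊤ resp mod I'•⊤
  have hM3' : ∀ x : L, ∃ m, m ∈ M ∧ x - m ∈ I' • (⊤ : Submodule A L) := by
    intro x
    obtain ⟨y, hy⟩ := Submodule.Quotient.mk_surjective (I • (⊤ : Submodule A L))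
      (φ.symm (Submodule.Quotient.mk x))
    refine ⟨ε' • y + ε • x, ?_, ?_⟩
    · have hmI : (Submodule.Quotient.mk (ε' • y + ε • x) :
          L ⧸ (I • (⊤ : Submodule A L))) = Submodule.Quotient.mk y := by
        rw [Submodule.Quotient.eq]
        have : ε' • y + ε • x - y = ε • (x - y) := by
          rw [smul_sub]
          have : ε' • y = y - ε • y := by
            rw [eq_sub_iff_add_eq, ← add_smul, add_comm ε' ε, hεsum, one_smul]
          rw [this]; abel
        rw [this]
        exact Submodule.smul_mem_smul hεI Submodule.mem_top
      have hmI' : (Submodule.Quotient.mk (ε' • y + ε • x) :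
          L ⧸ (I' • (⊤ : Submodule A L))) = Submodule.Quotient.mk x := by
        rw [Submodule.Quotient.eq]
        have : ε' • y + ε • x - x = ε' • (y - x) := by
          rw [smul_sub]
          have : ε • x = x - ε' • x := by
            rw [eq_sub_iff_add_eq, ← add_smul, hεsum, one_smul]
          rw [this]; abel
        rw [this]
        exact Submodule.smul_mem_smul hε'I' Submodule.mem_top
      show φ _ = _
      rw [hmI, hy, AddEquiv.apply_symm_apply, hmI']
    · have : x - (ε' • y + ε • x) = ε' • (x - y) := by
        rw [smul_sub]
        have : ε • x = x - ε' • x := by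
          rw [eq_sub_iff_add_eq, ← add_smul, hεsum, one_smul]
        rw [this]; abel
      rw [this]
      exact Submodule.smul_mem_smul hε'I' Submodule.mem_top
  have hM3 : ∀ x : L, ∃ m, m ∈ M ∧ x - m ∈ I • (⊤ : Submodule A L) := by
    intro x
    obtain ⟨y, hy⟩ := Submodule.Quotient.mk_surjective (I' • (⊤ : Submodule A L))
      (φ (Submodule.Quotient.mk x))
    refine ⟨ε' • x + ε • y, ?_, ?_⟩
    · have hmI : (Submodule.Quotient.mk (ε' • x + ε • y) :
          L ⧸ (I • (⊤ : Submodule A L))) = Submodule.Quotient.mk x := by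
        rw [Submodule.Quotient.eq]
        have : ε' • x + ε • y - x = ε • (y - x) := by
          rw [smul_sub]
          have : ε' • x = x - ε • x := by
            rw [eq_sub_iff_add_eq, ← add_smul, add_comm ε' ε, hεsum, one_smul]
          rw [this]; abel
        rw [this]
        exact Submodule.smul_mem_smul hεI Submodule.mem_top
      have hmI' : (Submodule.Quotient.mk (ε' • x + ε • y) :
          L ⧸ (I' • (⊤ : Submodule A L))) = Submodule.Quotient.mk y := by
        rw [Submodule.Quotient.eq]
        have : ε' • x + ε • y - y = ε' • (x - y) := by
          rw [smul_sub]
          have : ε • y = y - ε' • y := by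
            rw [eq_sub_iff_add_eq, ← add_smul, hεsum, one_smul]
          rw [this]; abel
        rw [this]
        exact Submodule.smul_mem_smul hε'I' Submodule.mem_top
      show φ _ = _
      rw [hmI, ← hy, hmI']
    · have : x - (ε' • x + ε • y) = ε • (x - y) - (x - x) := by
        rw [smul_sub]
        have : ε' • x = x - ε • x := by
          rw [eq_sub_iff_add_eq, ← add_smul, add_comm ε' ε, hεsum, one_smul]
        rw [this]; abel
      rw [show x - (ε' • x + ε • y) = -(ε • (y - x)) by
        rw [smul_sub]
        have : ε' • x = x - ε • x := by
          rw [eq_sub_iff_add_eq, ← add_smul, add_comm ε' ε, hεsum, one_smul]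
        rw [this]; abel]
      exact Submodule.neg_mem _ (Submodule.smul_mem_smul hεI Submodule.mem_top)
  -- A-span of M is everything
  have hspan : Submodule.span A ((M : Set L)) = ⊤ := by
    set W := Submodule.span A ((M : Set L)) with hWdef
    have hsub : ∀ m ∈ M, m ∈ W := fun m hm => Submodule.subset_span hm
    have htop : (⊤ : Submodule A L) ≤ W ⊔ I • (⊤ : Submodule A L) := by
      intro x _
      obtain ⟨m, hm, hxm⟩ := hM3 x
      exact Submodule.mem_sup.mpr ⟨m, hsub m hm, x - m, hxm, by abel⟩
    have htop' : (⊤ : Submodule A L) ≤ W ⊔ I' • (⊤ : Submodule A L) := by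
      intro x _
      obtain ⟨m, hm, hxm⟩ := hM3' x
      exact Submodule.mem_sup.mpr ⟨m, hsub m hm, x - m, hxm, by abel⟩
    have hIIW : I • (I' • (⊤ : Submodule A L)) ≤ W := by
      rw [Submodule.smul_le]
      intro r hr z hz
      refine hsub _ ?_
      show φ _ = _
      have hz1 : r • z ∈ I • (⊤ : Submodule A L) := Submodule.smul_mem_smul hr Submodule.mem_top
      have hz2 : r • z ∈ I' • (⊤ : Submodule A L) := Submodule.smul_mem _ r hz
      rw [(Submodule.Quotient.mk_eq_zero _).mpr hz1, (Submodule.Quotient.mk_eq_zero _).mpr hz2,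
        map_zero]
    have hWsmul : I • W ≤ W := by
      rw [Submodule.smul_le]
      intro r _ z hz
      exact W.smul_mem r hz
    have : I • (⊤ : Submodule A L) ≤ W := by
      calc I • (⊤ : Submodule A L) ≤ I • (W ⊔ I' • (⊤ : Submodule A L)) :=
            smul_mono_right I htop'
      _ = I • W ⊔ I • (I' • (⊤ : Submodule A L)) := Submodule.smul_sup _ _ _
      _ ≤ W := sup_le hWsmul hIIW
    exact top_le_iff.mp (le_trans htop (sup_le le_rfl this))
  -- B-module structure on N
  letI instBN : Module B N := Module.compHom N (algebraMap B A)
  have hBsmulN : ∀ (b : B) (n : N), b • n = algebraMap B A b • n := fun _ _ => rfl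
  -- the submodule M' of N
  set M' : Submodule B N :=
    { carrier := {n | ∀ m ∈ M, ∃ b : B, algebraMap B A b = e (m ⊗ₜ n)}
      add_mem' := by
        intro n n' hn hn' m hm
        obtain ⟨b1, hb1⟩ := hn m hm
        obtain ⟨b2, hb2⟩ := hn' m hm
        exact ⟨b1 + b2, by rw [map_add, hb1, hb2, TensorProduct.tmul_add, map_add]⟩
      zero_mem' := by
        intro m hm
        exact ⟨0, by rw [map_zero, TensorProduct.tmul_zero, map_zero]⟩
      smul_mem' := by
        intro b n hn m hm
        obtain ⟨b1, hb1⟩ := hn m hm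
        refine ⟨b * b1, ?_⟩
        rw [map_mul, hb1, hBsmulN, TensorProduct.tmul_smul, map_smul, smul_eq_mul]
    } with hM'def
  have hM'iff : ∀ n : N, n ∈ M' ↔ ∀ m ∈ M, ∃ b : B, algebraMap B A b = e (m ⊗ₜ n) :=
    fun _ => Iff.rfl
  -- approximation of any element of N by M' mod I'•⊤
  have hM'I' : ∀ q : N, ∃ n', n' ∈ M' ∧ q - n' ∈ I' • (⊤ : Submodule A N) := by
    intro q
    -- choose lifts w i of φ(mk i.1)
    have hw : ∀ i : L × N, ∃ w : L,
        (Submodule.Quotient.mk w : L ⧸ (I' • (⊤ : Submodule A L))) =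
          φ (Submodule.Quotient.mk i.1) :=
      fun i => Submodule.Quotient.mk_surjective _ _
    choose w hw using hw
    -- choose lifts a i of σ⁻¹(mk (e (w i ⊗ q)))
    have ha : ∀ i : L × N, ∃ a : A,
        Ideal.Quotient.mk I a = σ.symm (Ideal.Quotient.mk I' (e (w i ⊗ₜ q))) :=
      fun i => Ideal.Quotient.mk_surjective _
    choose a ha using ha
    set nt : N := ∑ i ∈ S, a i • i.2 with hnt
    refine ⟨ε' • nt + ε • q, ?_, ?_⟩
    · -- membership in M'
      intro m hm
      -- the two congruences
      have hd1 : (ε' • nt + ε • q) - nt ∈ I • (⊤ : Submodule A N) := by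
        rw [show (ε' • nt + ε • q) - nt = ε • (q - nt) by
          rw [smul_sub]
          have : ε' • nt = nt - ε • nt := by
            rw [eq_sub_iff_add_eq, ← add_smul, add_comm ε' ε, hεsum, one_smul]
          rw [this]; abel]
        exact Submodule.smul_mem_smul hεI Submodule.mem_top
      have hd2 : (ε' • nt + ε • q) - q ∈ I' • (⊤ : Submodule A N) := by
        rw [show (ε' • nt + ε • q) - q = ε' • (nt - q) by
          rw [smul_sub]
          have : ε • q = q - ε' • q := by
            rw [eq_sub_iff_add_eq, ← add_smul, hεsum, one_smul]
          rw [this]; abel]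
        exact Submodule.smul_mem_smul hε'I' Submodule.mem_top
      apply hmem
      -- reduce modulo I to nt, modulo I' to q
      have e1 : Ideal.Quotient.mk I (e (m ⊗ₜ (ε' • nt + ε • q))) =
          Ideal.Quotient.mk I (e (m ⊗ₜ nt)) := by
        rw [Ideal.Quotient.mk_eq_mk_iff_sub_mem, ← map_sub, ← TensorProduct.tmul_sub]
        exact hNpair I _ hd1 m
      have e2 : Ideal.Quotient.mk I' (e (m ⊗ₜ (ε' • nt + ε • q))) =
          Ideal.Quotient.mk I' (e (m ⊗ₜ q)) := by
        rw [Ideal.Quotient.mk_eq_mk_iff_sub_mem, ← map_sub, ← TensorProduct.tmul_sub]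
        exact hNpair I' _ hd2 m
      rw [e1, e2]
      -- choose lifts b' i of σ(mk (e (m ⊗ i.2)))
      have hb' : ∀ i : L × N, ∃ b : A,
          Ideal.Quotient.mk I' b = σ (Ideal.Quotient.mk I (e (m ⊗ₜ i.2))) :=
        fun i => Ideal.Quotient.mk_surjective _
      choose b' hb' using hb'
      -- LHS computation
      have hL1 : e (m ⊗ₜ nt) = ∑ i ∈ S, a i * e (m ⊗ₜ i.2) := by
        rw [hnt, TensorProduct.tmul_sum, map_sum]
        exact Finset.sum_congr rfl fun i _ => by
          rw [TensorProduct.tmul_smul, map_smul, smul_eq_mul]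
      have hLHS : σ (Ideal.Quotient.mk I (e (m ⊗ₜ nt))) =
          Ideal.Quotient.mk I' (∑ i ∈ S, b' i * e (w i ⊗ₜ q)) := by
        rw [hL1, map_sum, map_sum, map_sum]
        refine Finset.sum_congr rfl fun i _ => ?_
        rw [map_mul, map_mul, ha i, RingEquiv.apply_symm_apply, ← hb' i, map_mul, mul_comm]
      -- RHS computation using the dual basis and φ
      have hstep5 : m - ∑ i ∈ S, b' i • w i ∈ I' • (⊤ : Submodule A L) := by
        rw [← Submodule.Quotient.eq]
        have hphi : φ (Submodule.Quotient.mk m) =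
            Submodule.Quotient.mk (∑ i ∈ S, b' i • w i) := by
          conv_lhs => rw [← hDB m]
          rw [hmksum _ (fun i => e (m ⊗ₜ i.2) • i.1), map_sum,
            hmksum _ (fun i => b' i • w i)]
          refine Finset.sum_congr rfl fun i _ => ?_
          rw [hφ _ (b' i) i.1 (hb' i).symm, ← hw i, Submodule.Quotient.mk_smul]
        rw [← hphi]
        exact (hm : φ _ = _).symm
      have hRHS : Ideal.Quotient.mk I' (e (m ⊗ₜ q)) =
          Ideal.Quotient.mk I' (∑ i ∈ S, b' i * e (w i ⊗ₜ q)) := by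
        rw [Ideal.Quotient.mk_eq_mk_iff_sub_mem]
        have : e (m ⊗ₜ q) - ∑ i ∈ S, b' i * e (w i ⊗ₜ q) =
            e ((m - ∑ i ∈ S, b' i • w i) ⊗ₜ q) := by
          rw [TensorProduct.sub_tmul, map_sub, TensorProduct.sum_tmul, map_sum]
          congr 1
          refine Finset.sum_congr rfl fun i _ => ?_
          rw [← TensorProduct.smul_tmul', map_smul, smul_eq_mul]
        rw [this]
        exact hpair I' _ hstep5 q
      rw [hLHS, hRHS]
    · rw [show q - (ε' • nt + ε • q) = ε' • (q - nt) by
        rw [smul_sub]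
        have : ε • q = q - ε' • q := by
          rw [eq_sub_iff_add_eq, ← add_smul, hεsum, one_smul]
        rw [this]; abel]
      exact Submodule.smul_mem_smul hε'I' Submodule.mem_top
  -- conductor elements multiplied by anything lie in B
  have hcB : ∀ a : A, a ∈ I → a ∈ I' → ∀ t : A, ∃ b : B, algebraMap B A b = a * t := by
    intro a haI haI' t
    apply hmem
    rw [map_mul, map_mul, Ideal.Quotient.eq_zero_iff_mem.mpr haI,
      Ideal.Quotient.eq_zero_iff_mem.mpr (Ideal.mul_mem_right t _ haI'), map_zero, zero_mul]
  -- the ideal generated by the pairing values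
  set Jb : Ideal B :=
    Ideal.span {b : B | ∃ m ∈ M, ∃ n ∈ M', algebraMap B A b = e (m ⊗ₜ n)} with hJbdef
  -- Claim A : every element of B is congruent to an element of Jb mod the conductor
  have claimA : ∀ b : B, ∃ j ∈ Jb,
      algebraMap B A (b - j) ∈ I ∧ algebraMap B A (b - j) ∈ I' := by
    intro b
    set a : A := algebraMap B A b with hadef
    have hrep := hadec a
    -- approximations
    have hmm : ∀ i : L × N, ∃ m, m ∈ M ∧ a • i.1 - m ∈ I' • (⊤ : Submodule A L) :=
      fun i => hM3' (a • i.1)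
    choose mm hmmM hmm' using hmm
    have hqq : ∀ i : L × N, ∃ n', n' ∈ M' ∧ i.2 - n' ∈ I' • (⊤ : Submodule A N) :=
      fun i => hM'I' i.2
    choose qq hqqM hqq' using hqq
    have hbb : ∀ i : L × N, ∃ bb : B, algebraMap B A bb = e (mm i ⊗ₜ qq i) :=
      fun i => (hqqM i) (mm i) (hmmM i)
    choose bb hbb using hbb
    refine ⟨∑ i ∈ S, bb i, Ideal.sum_mem _ fun i _ =>
      Ideal.subset_span ⟨mm i, hmmM i, qq i, hqqM i, hbb i⟩, ?_, ?_⟩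
    · -- in I: follows from being in range with I'-part zero
      have h2 : algebraMap B A (b - ∑ i ∈ S, bb i) ∈ I' := by
        rw [map_sub, map_sum]
        have : a - ∑ i ∈ S, algebraMap B A (bb i) =
            ∑ i ∈ S, (e ((a • i.1) ⊗ₜ i.2) - e (mm i ⊗ₜ qq i)) := by
          rw [Finset.sum_sub_distrib, ← hrep]
          congr 1
          exact Finset.sum_congr rfl fun i _ => (hbb i)
        rw [← hadef, this]
        refine Ideal.sum_mem _ fun i _ => ?_
        have hdec : e ((a • i.1) ⊗ₜ i.2) - e (mm i ⊗ₜ qq i) =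
            e ((a • i.1 - mm i) ⊗ₜ i.2) + e (mm i ⊗ₜ (i.2 - qq i)) := by
          rw [TensorProduct.sub_tmul, TensorProduct.tmul_sub, map_sub, map_sub]
          abel
        rw [hdec]
        exact Ideal.add_mem _ (hpair I' _ (hmm' i) i.2) (hNpair I' _ (hqq' i) (mm i))
      have h3 := hmem' (b - ∑ i ∈ S, bb i)
      rw [Ideal.Quotient.eq_zero_iff_mem.mpr h2] at h3
      have h4 : Ideal.Quotient.mk I (algebraMap B A (b - ∑ i ∈ S, bb i)) = 0 := by
        apply σ.injective
        rw [h3, map_zero]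
      exact Ideal.Quotient.eq_zero_iff_mem.mp h4
    · rw [map_sub, map_sum]
      have : a - ∑ i ∈ S, algebraMap B A (bb i) =
          ∑ i ∈ S, (e ((a • i.1) ⊗ₜ i.2) - e (mm i ⊗ₜ qq i)) := by
        rw [Finset.sum_sub_distrib, ← hrep]
        congr 1
        exact Finset.sum_congr rfl fun i _ => (hbb i)
      rw [← hadef, this]
      refine Ideal.sum_mem _ fun i _ => ?_
      have hdec : e ((a • i.1) ⊗ₜ i.2) - e (mm i ⊗ₜ qq i) =
          e ((a • i.1 - mm i) ⊗ₜ i.2) + e (mm i ⊗ₜ (i.2 - qq i)) := by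
        rw [TensorProduct.sub_tmul, TensorProduct.tmul_sub, map_sub, map_sub]
        abel
      rw [hdec]
      exact Ideal.add_mem _ (hpair I' _ (hmm' i) i.2) (hNpair I' _ (hqq' i) (mm i))
  -- Claim B : products of two conductor elements of B lie in Jb
  have claimB : ∀ β γ : B, algebraMap B A β ∈ I → algebraMap B A β ∈ I' →
      algebraMap B A γ ∈ I → algebraMap B A γ ∈ I' → β * γ ∈ Jb := by
    intro β γ hβI hβI' hγI hγI'
    have hmmM : ∀ i : L × N, (algebraMap B A β) • i.1 ∈ M := by
      intro i
      show φ _ = _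
      have hz1 : (algebraMap B A β) • i.1 ∈ I • (⊤ : Submodule A L) :=
        Submodule.smul_mem_smul hβI Submodule.mem_top
      have hz2 : (algebraMap B A β) • i.1 ∈ I' • (⊤ : Submodule A L) :=
        Submodule.smul_mem_smul hβI' Submodule.mem_top
      rw [(Submodule.Quotient.mk_eq_zero _).mpr hz1, (Submodule.Quotient.mk_eq_zero _).mpr hz2,
        map_zero]
    have hqqM : ∀ i : L × N, (algebraMap B A γ) • i.2 ∈ M' := by
      intro i m hm
      rw [TensorProduct.tmul_smul, map_smul, smul_eq_mul]
      exact hcB _ hγI hγI' _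
    have hbb : ∀ i : L × N, ∃ bb : B,
        algebraMap B A bb = e (((algebraMap B A β) • i.1) ⊗ₜ ((algebraMap B A γ) • i.2)) := by
      intro i
      rw [← TensorProduct.smul_tmul', TensorProduct.tmul_smul, map_smul, map_smul, smul_eq_mul,
        smul_eq_mul, ← mul_assoc, mul_comm (algebraMap B A β) (algebraMap B A γ), mul_assoc]
      exact hcB _ hγI hγI' _
    choose bb hbb using hbb
    have hsum : β * γ = ∑ i ∈ S, bb i := by
      apply hinj
      rw [map_mul, map_sum]
      have : ∑ i ∈ S, algebraMap B A (bb i) =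
          ∑ i ∈ S, (algebraMap B A β * algebraMap B A γ) * e (i.1 ⊗ₜ i.2) := by
        refine Finset.sum_congr rfl fun i _ => ?_
        rw [hbb i, ← TensorProduct.smul_tmul', TensorProduct.tmul_smul, map_smul, map_smul,
          smul_eq_mul, smul_eq_mul]
        ring
      rw [this, ← Finset.mul_sum, h1, mul_one]
    rw [hsum]
    exact Ideal.sum_mem _ fun i _ =>
      Ideal.subset_span ⟨_, hmmM i, _, hqqM i, hbb i⟩
  -- 1 ∈ Jb
  have h1Jb : (1 : B) ∈ Jb := by
    obtain ⟨j, hj, hδI, hδI'⟩ := claimA 1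
    have : (1 : B) = j + (1 - j) * j + (1 - j) * (1 - j) := by ring
    rw [this]
    exact Ideal.add_mem _ (Ideal.add_mem _ hj (Ideal.mul_mem_left _ _ hj))
      (claimB _ _ hδI hδI' hδI hδI')
  -- extract a finite family of pairings summing to 1
  obtain ⟨k, f, g, hfg⟩ := Submodule.mem_span_set'.mp h1Jb
  have hgi : ∀ i : Fin k, ∃ m : L, m ∈ M ∧ ∃ n : N, n ∈ M' ∧
      algebraMap B A ((g i) : B) = e (m ⊗ₜ n) := by
    intro i
    obtain ⟨m, hm, n, hn, h⟩ := (g i).2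
    exact ⟨m, hm, n, hn, h⟩
  choose mg hmg ng hng hgspec using hgi
  set p : Fin k → ↥M := fun i => f i • ⟨mg i, hmg i⟩ with hpdef
  set p' : Fin k → ↥M' := fun i => ⟨ng i, hng i⟩ with hp'def
  have hpcoe : ∀ i, ((p i : ↥M) : L) = algebraMap B A (f i) • mg i := by
    intro i
    rw [hpdef]
    simp only [Submodule.coe_smul]
    rw [algebraMap_smul]
  have hp1 : ∑ i, e ((p i : L) ⊗ₜ ((p' i : ↥M') : N)) = 1 := by
    have : ∀ i : Fin k, e ((p i : L) ⊗ₜ ((p' i : ↥M') : N)) =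
        algebraMap B A (f i * (g i : B)) := by
      intro i
      rw [hpcoe i, hp'def, ← TensorProduct.smul_tmul', map_smul, smul_eq_mul, map_mul]
      simp only []
      rw [hgspec i]
    rw [Finset.sum_congr rfl fun i _ => this i, ← map_sum]
    simp only [smul_eq_mul] at hfg
    rw [hfg, map_one]
  -- the pairing function into B
  have hFex : ∀ (m : ↥M) (n : ↥M'), ∃ b : B,
      algebraMap B A b = e ((m : L) ⊗ₜ ((n : ↥M') : N)) :=
    fun m n => n.2 (m : L) m.2
  choose F hF using hFex
  have hFone : ∑ i, F (p i) (p' i) = 1 := by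
    apply hinj
    rw [map_sum, map_one, ← hp1]
    exact Finset.sum_congr rfl fun i _ => hF _ _
  -- bilinearity of F
  have hFadd1 : ∀ m1 m2 n, F (m1 + m2) n = F m1 n + F m2 n := by
    intro m1 m2 n
    apply hinj
    rw [map_add, hF, hF, hF, Submodule.coe_add, TensorProduct.add_tmul, map_add]
  have hFsmul1 : ∀ (b : B) m n, F (b • m) n = b * F m n := by
    intro b m n
    apply hinj
    rw [map_mul, hF, hF, Submodule.coe_smul, ← algebraMap_smul A b (m : L),
      ← TensorProduct.smul_tmul', map_smul, smul_eq_mul]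
  have hFadd2 : ∀ m n1 n2, F m (n1 + n2) = F m n1 + F m n2 := by
    intro m n1 n2
    apply hinj
    rw [map_add, hF, hF, hF, Submodule.coe_add, TensorProduct.tmul_add, map_add]
  have hFsmul2 : ∀ (b : B) m n, F m (b • n) = b * F m n := by
    intro b m n
    apply hinj
    rw [map_mul, hF, hF, Submodule.coe_smul, hBsmulN, TensorProduct.tmul_smul, map_smul,
      smul_eq_mul]
  -- the key symmetry swaps
  have hswap1 : ∀ (m : ↥M) (i : Fin k), F (p i) (p' i) • m = F m (p' i) • p i := by
    intro m i
    apply Subtype.ext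
    rw [Submodule.coe_smul, Submodule.coe_smul, ← algebraMap_smul A (F (p i) (p' i)) (m : L),
      ← algebraMap_smul A (F m (p' i)) ((p i : ↥M) : L), hF, hF]
    exact hsym _ _ _
  have hswap2 : ∀ (m : ↥M) (n : ↥M') (i : Fin k), F m (p' i) • n = F m n • p' i := by
    intro m n i
    apply Subtype.ext
    rw [Submodule.coe_smul, Submodule.coe_smul, hBsmulN, hBsmulN, hF, hF]
    exact hNsym _ _ _
  -- the B-linear pairing map
  set PP : TensorProduct B (↥M) (↥M') →ₗ[B] B := TensorProduct.lift (LinearMap.mk₂ B F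
    hFadd1 (fun b m n => by rw [hFsmul1]; rw [smul_eq_mul])
    hFadd2 (fun b m n => by rw [hFsmul2]; rw [smul_eq_mul])) with hPPdef
  have hPP : ∀ (m : ↥M) (n : ↥M'), PP (m ⊗ₜ n) = F m n := by
    intro m n
    rw [hPPdef]
    simp
  have hPsurj : Function.Surjective PP := by
    intro b
    refine ⟨b • ∑ i, (p i) ⊗ₜ (p' i), ?_⟩
    rw [map_smul, map_sum]
    rw [Finset.sum_congr rfl fun i _ => hPP (p i) (p' i), hFone, smul_eq_mul, mul_one]
  have hPinj : Function.Injective PP := by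
    rw [injective_iff_map_eq_zero]
    intro z hz
    obtain ⟨Sz, hSz⟩ := TensorProduct.exists_finset z
    have hz0 : ∑ j ∈ Sz, F j.1 j.2 = 0 := by
      rw [hSz, map_sum] at hz
      rw [← hz]
      exact Finset.sum_congr rfl fun j _ => (hPP j.1 j.2).symm
    calc z = ∑ j ∈ Sz, j.1 ⊗ₜ j.2 := hSz
    _ = ∑ j ∈ Sz, ((∑ i, F (p i) (p' i)) • j.1) ⊗ₜ j.2 := by
        rw [hFone]
        exact Finset.sum_congr rfl fun j _ => by rw [one_smul]
    _ = ∑ j ∈ Sz, ∑ i, (F (p i) (p' i) • j.1) ⊗ₜ j.2 := by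
        refine Finset.sum_congr rfl fun j _ => ?_
        rw [Finset.sum_smul, TensorProduct.sum_tmul]
    _ = ∑ j ∈ Sz, ∑ i, (F j.1 (p' i) • p i) ⊗ₜ j.2 := by
        refine Finset.sum_congr rfl fun j _ => Finset.sum_congr rfl fun i _ => ?_
        rw [hswap1]
    _ = ∑ j ∈ Sz, ∑ i, (p i) ⊗ₜ (F j.1 (p' i) • j.2) := by
        refine Finset.sum_congr rfl fun j _ => Finset.sum_congr rfl fun i _ => ?_
        rw [TensorProduct.smul_tmul]
    _ = ∑ j ∈ Sz, ∑ i, (p i) ⊗ₜ (F j.1 j.2 • p' i) := by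
        refine Finset.sum_congr rfl fun j _ => Finset.sum_congr rfl fun i _ => ?_
        rw [hswap2]
    _ = ∑ i, (p i) ⊗ₜ ((∑ j ∈ Sz, F j.1 j.2) • p' i) := by
        rw [Finset.sum_comm]
        refine Finset.sum_congr rfl fun i _ => ?_
        rw [Finset.sum_smul, TensorProduct.tmul_sum]
    _ = 0 := by
        rw [hz0]
        simp
  -- the comparison map A ⊗[B] M → L
  haveI hSMC : SMulCommClass B A L := ⟨fun b a x => by
    rw [← algebraMap_smul A b x, ← algebraMap_smul A b (a • x), smul_smul, smul_smul,
      mul_comm]⟩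
  set μ : TensorProduct B A (↥M) →ₗ[A] L := TensorProduct.AlgebraTensorModule.lift
    { toFun := fun a => a • (M.subtype)
      map_add' := fun a a' => add_smul a a' _
      map_smul' := fun a a' => mul_smul a a' _ } with hμdef
  have hμtmul : ∀ (a : A) (m : ↥M), μ (a ⊗ₜ m) = a • (m : L) := by
    intro a m
    rw [hμdef]
    simp
  have hμsurj : Function.Surjective μ := by
    intro x
    have hx : x ∈ Submodule.span A ((M : Set L)) := by rw [hspan]; trivial
    refine Submodule.span_induction (p := fun x _ => ∃ z, μ z = x) ?_ ?_ ?_ ?_ hx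
    · intro y hy
      exact ⟨(1 : A) ⊗ₜ ⟨y, hy⟩, by rw [hμtmul, one_smul]⟩
    · exact ⟨0, map_zero _⟩
    · rintro x y _ _ ⟨z1, hz1⟩ ⟨z2, hz2⟩
      exact ⟨z1 + z2, by rw [map_add, hz1, hz2]⟩
    · rintro a x _ ⟨z, hz⟩
      exact ⟨a • z, by rw [map_smul, hz]⟩
  have hμinj : Function.Injective μ := by
    rw [injective_iff_map_eq_zero]
    intro z hz
    obtain ⟨Sz, hSz⟩ := TensorProduct.exists_finset z
    have hz0 : ∑ j ∈ Sz, j.1 • ((j.2 : ↥M) : L) = 0 := by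
      rw [hSz, map_sum] at hz
      rw [← hz]
      exact Finset.sum_congr rfl fun j _ => (hμtmul j.1 j.2).symm
    have hcoef : ∀ i : Fin k, ∑ j ∈ Sz, e (((j.2 : ↥M) : L) ⊗ₜ ((p' i : ↥M') : N)) * j.1
        = 0 := by
      intro i
      have : ∑ j ∈ Sz, e (((j.2 : ↥M) : L) ⊗ₜ ((p' i : ↥M') : N)) * j.1 =
          e ((∑ j ∈ Sz, j.1 • ((j.2 : ↥M) : L)) ⊗ₜ ((p' i : ↥M') : N)) := by
        rw [TensorProduct.sum_tmul, map_sum]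
        refine Finset.sum_congr rfl fun j _ => ?_
        rw [← TensorProduct.smul_tmul', map_smul, smul_eq_mul, mul_comm]
      rw [this, hz0, TensorProduct.zero_tmul, map_zero]
    calc z = ∑ j ∈ Sz, j.1 ⊗ₜ j.2 := hSz
    _ = ∑ j ∈ Sz, j.1 ⊗ₜ ((∑ i, F (p i) (p' i)) • j.2) := by
        rw [hFone]
        exact Finset.sum_congr rfl fun j _ => by rw [one_smul]
    _ = ∑ j ∈ Sz, ∑ i, j.1 ⊗ₜ (F (p i) (p' i) • j.2) := by
        refine Finset.sum_congr rfl fun j _ => ?_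
        rw [Finset.sum_smul, TensorProduct.tmul_sum]
    _ = ∑ j ∈ Sz, ∑ i, j.1 ⊗ₜ (F j.2 (p' i) • p i) := by
        refine Finset.sum_congr rfl fun j _ => Finset.sum_congr rfl fun i _ => ?_
        rw [hswap1]
    _ = ∑ j ∈ Sz, ∑ i, (e (((j.2 : ↥M) : L) ⊗ₜ ((p' i : ↥M') : N)) * j.1) ⊗ₜ p i := by
        refine Finset.sum_congr rfl fun j _ => Finset.sum_congr rfl fun i _ => ?_
        rw [← TensorProduct.smul_tmul, Algebra.smul_def, hF]
    _ = ∑ i, (∑ j ∈ Sz, e (((j.2 : ↥M) : L) ⊗ₜ ((p' i : ↥M') : N)) * j.1) ⊗ₜ p i := by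
        rw [Finset.sum_comm]
        refine Finset.sum_congr rfl fun i _ => ?_
        rw [TensorProduct.sum_tmul]
    _ = 0 := by
        refine Finset.sum_eq_zero fun i _ => ?_
        rw [hcoef i, TensorProduct.zero_tmul]
  exact ⟨M, hMiff,
    ⟨↥M', inferInstance, inferInstance, ⟨LinearEquiv.ofBijective PP ⟨hPinj, hPsurj⟩⟩⟩,
    ⟨LinearEquiv.ofBijective μ ⟨hμinj, hμsurj⟩⟩⟩
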